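/- Let A, Ω, b₁ be real numbers with A > 0, Ω > 0, b₁ > 0, and set μ = ((9/70)·A·Ω^{3/2}·b₁^{3/2})^{1/2} and ν = −(16/9)·μ³. Then the function u(x, t) = Ω·b₁·(cosh(μx + νt))^{−4/3}, with real-number powers, satisfies the equation u_t + A·u^{3/2}·u_x + u_{xxx} = 0 for all (x, t) ∈ ℝ², where u^{3/2} is a real power (u > 0). -/

import Mathlib

private lemma coshL_hasDeriv (a b : ℝ) (y : ℝ) :
    HasDerivAt (fun y => Real.cosh (a * y + b)) (Real.sinh (a * y + b) * a) y := by
  have hl : HasDerivAt (fun y : ℝ => a * y + b) a y := by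
    simpa using ((hasDerivAt_id y).const_mul a).add_const b
  exact (Real.hasDerivAt_cosh _).comp y hl

private lemma sinhL_hasDeriv (a b : ℝ) (y : ℝ) :
    HasDerivAt (fun y => Real.sinh (a * y + b)) (Real.cosh (a * y + b) * a) y := by
  have hl : HasDerivAt (fun y : ℝ => a * y + b) a y := by
    simpa using ((hasDerivAt_id y).const_mul a).add_const b
  exact (Real.hasDerivAt_sinh _).comp y hl

private lemma coshpow_hasDeriv (a b p : ℝ) (y : ℝ) :
    HasDerivAt (fun y => Real.cosh (a * y + b) ^ p)
      (p * Real.cosh (a * y + b) ^ (p - 1) * (Real.sinh (a * y + b) * a)) y := by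
  have h := Real.hasDerivAt_rpow_const (x := Real.cosh (a * y + b)) (p := p)
      (Or.inl (Real.cosh_pos _).ne')
  exact h.comp y (coshL_hasDeriv a b y)

theorem stmt13 (A Ω b₁ μ ν : ℝ) (hA : 0 < A) (hΩ : 0 < Ω) (hb : 0 < b₁)
    (hμ : μ = ((9 / 70) * A * Ω ^ ((3 : ℝ) / 2) * b₁ ^ ((3 : ℝ) / 2)) ^ ((1 : ℝ) / 2))
    (hν : ν = -(16 / 9) * μ ^ 3)
    (u : ℝ → ℝ → ℝ)
    (hu : ∀ x t : ℝ, u x t = Ω * b₁ * (Real.cosh (μ * x + ν * t)) ^ (-(4 : ℝ) / 3)) :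
    ∀ x t : ℝ,
      deriv (fun τ => u x τ) t + A * (u x t) ^ ((3 : ℝ) / 2) * deriv (fun y => u y t) x
        + iteratedDeriv 3 (fun y => u y t) x = 0 := by
  intro x t
  set C : ℝ := Ω * b₁ with hCdef
  have hC : 0 < C := mul_pos hΩ hb
  -- spatial function
  have hfun : (fun y => u y t) = fun y => C * Real.cosh (μ * y + ν * t) ^ (-(4 : ℝ) / 3) := by
    funext y; rw [hu]
  -- first spatial derivative
  have hf0 : ∀ y, HasDerivAt (fun y => u y t)
      ((-(4 : ℝ) / 3 * C * μ) * (Real.cosh (μ * y + ν * t) ^ (-(7 : ℝ) / 3)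
        * Real.sinh (μ * y + ν * t))) y := by
    intro y
    rw [hfun]
    have h := (coshpow_hasDeriv μ (ν * t) (-(4 : ℝ) / 3) y).const_mul C
    refine h.congr_deriv ?_
    symm
    rw [show (-(4 : ℝ) / 3 - 1) = -(7 : ℝ) / 3 by norm_num]
    ring
  have e0 : deriv (fun y => u y t)
      = fun y => (-(4 : ℝ) / 3 * C * μ) * (Real.cosh (μ * y + ν * t) ^ (-(7 : ℝ) / 3)
        * Real.sinh (μ * y + ν * t)) := funext fun y => (hf0 y).deriv
  -- second spatial derivative
  have hf1 : ∀ y, HasDerivAt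
      (fun y => (-(4 : ℝ) / 3 * C * μ) * (Real.cosh (μ * y + ν * t) ^ (-(7 : ℝ) / 3)
        * Real.sinh (μ * y + ν * t)))
      (C * μ ^ 2 * ((28 / 9) * Real.cosh (μ * y + ν * t) ^ (-(10 : ℝ) / 3)
        * Real.sinh (μ * y + ν * t) ^ 2
        - (4 / 3) * Real.cosh (μ * y + ν * t) ^ (-(4 : ℝ) / 3))) y := by
    intro y
    have h := ((coshpow_hasDeriv μ (ν * t) (-(7 : ℝ) / 3) y).mul
      (sinhL_hasDeriv μ (ν * t) y)).const_mul (-(4 : ℝ) / 3 * C * μ)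
    refine h.congr_deriv ?_
    symm
    rw [show (-(7 : ℝ) / 3 - 1) = -(10 : ℝ) / 3 by norm_num]
    have e1 : Real.cosh (μ * y + ν * t) ^ (-(7 : ℝ) / 3) * Real.cosh (μ * y + ν * t)
        = Real.cosh (μ * y + ν * t) ^ (-(4 : ℝ) / 3) := by
      rw [← Real.rpow_add_one (Real.cosh_pos _).ne']; norm_num
    linear_combination ((4 : ℝ) / 3 * C * μ ^ 2) * e1
  have e1f : deriv (fun y => (-(4 : ℝ) / 3 * C * μ) * (Real.cosh (μ * y + ν * t) ^ (-(7 : ℝ) / 3)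
        * Real.sinh (μ * y + ν * t)))
      = fun y => C * μ ^ 2 * ((28 / 9) * Real.cosh (μ * y + ν * t) ^ (-(10 : ℝ) / 3)
        * Real.sinh (μ * y + ν * t) ^ 2
        - (4 / 3) * Real.cosh (μ * y + ν * t) ^ (-(4 : ℝ) / 3)) :=
    funext fun y => (hf1 y).deriv
  -- third spatial derivative
  have hf2 : ∀ y, HasDerivAt
      (fun y => C * μ ^ 2 * ((28 / 9) * Real.cosh (μ * y + ν * t) ^ (-(10 : ℝ) / 3)
        * Real.sinh (μ * y + ν * t) ^ 2
        - (4 / 3) * Real.cosh (μ * y + ν * t) ^ (-(4 : ℝ) / 3)))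
      (C * μ ^ 3 * ((-280 / 27) * Real.cosh (μ * y + ν * t) ^ (-(13 : ℝ) / 3)
        * Real.sinh (μ * y + ν * t) ^ 3
        + 8 * Real.cosh (μ * y + ν * t) ^ (-(7 : ℝ) / 3) * Real.sinh (μ * y + ν * t))) y := by
    intro y
    have h := ((((coshpow_hasDeriv μ (ν * t) (-(10 : ℝ) / 3) y).const_mul
        ((28 : ℝ) / 9)).mul ((sinhL_hasDeriv μ (ν * t) y).pow 2)).sub
        ((coshpow_hasDeriv μ (ν * t) (-(4 : ℝ) / 3) y).const_mul ((4 : ℝ) / 3))).const_mul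
        (C * μ ^ 2)
    refine h.congr_deriv ?_
    symm
    rw [show (-(10 : ℝ) / 3 - 1) = -(13 : ℝ) / 3 by norm_num,
      show (-(4 : ℝ) / 3 - 1) = -(7 : ℝ) / 3 by norm_num]
    have e2 : Real.cosh (μ * y + ν * t) ^ (-(10 : ℝ) / 3) * Real.cosh (μ * y + ν * t)
        = Real.cosh (μ * y + ν * t) ^ (-(7 : ℝ) / 3) := by
      rw [← Real.rpow_add_one (Real.cosh_pos _).ne']; norm_num
    simp only [pow_one, Nat.cast_ofNat, Pi.pow_apply]
    linear_combination (-(56 : ℝ) / 9 * C * μ ^ 3 * Real.sinh (μ * y + ν * t)) * e2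
  have e2f : deriv (fun y => C * μ ^ 2 * ((28 / 9) * Real.cosh (μ * y + ν * t) ^ (-(10 : ℝ) / 3)
        * Real.sinh (μ * y + ν * t) ^ 2
        - (4 / 3) * Real.cosh (μ * y + ν * t) ^ (-(4 : ℝ) / 3)))
      = fun y => C * μ ^ 3 * ((-280 / 27) * Real.cosh (μ * y + ν * t) ^ (-(13 : ℝ) / 3)
        * Real.sinh (μ * y + ν * t) ^ 3
        + 8 * Real.cosh (μ * y + ν * t) ^ (-(7 : ℝ) / 3) * Real.sinh (μ * y + ν * t)) :=
    funext fun y => (hf2 y).deriv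
  have h3 : iteratedDeriv 3 (fun y => u y t) x
      = C * μ ^ 3 * ((-280 / 27) * Real.cosh (μ * x + ν * t) ^ (-(13 : ℝ) / 3)
        * Real.sinh (μ * x + ν * t) ^ 3
        + 8 * Real.cosh (μ * x + ν * t) ^ (-(7 : ℝ) / 3) * Real.sinh (μ * x + ν * t)) := by
    rw [iteratedDeriv_succ,
      iteratedDeriv_succ, iteratedDeriv_one, e0, e1f, e2f]
  -- time derivative
  have htfun : (fun τ => u x τ) = fun τ => C * Real.cosh (ν * τ + μ * x) ^ (-(4 : ℝ) / 3) := by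
    funext τ; rw [hu, add_comm (μ * x)]
  have ht : deriv (fun τ => u x τ) t
      = (-(4 : ℝ) / 3 * C * ν) * (Real.cosh (μ * x + ν * t) ^ (-(7 : ℝ) / 3)
        * Real.sinh (μ * x + ν * t)) := by
    rw [htfun]
    have h := ((coshpow_hasDeriv ν (μ * x) (-(4 : ℝ) / 3) t).const_mul C).deriv
    rw [h, show (-(4 : ℝ) / 3 - 1) = -(7 : ℝ) / 3 by norm_num, add_comm (ν * t)]
    ring
  rw [ht, h3, e0, hu]
  -- now pure algebra
  set ch := Real.cosh (μ * x + ν * t) with hch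
  set sh := Real.sinh (μ * x + ν * t) with hsh
  have hchpos : 0 < ch := Real.cosh_pos _
  have emid : (Ω * b₁ * ch ^ (-(4 : ℝ) / 3)) ^ ((3 : ℝ) / 2)
      = (Ω ^ ((3 : ℝ) / 2) * b₁ ^ ((3 : ℝ) / 2)) * ch ^ (-(2 : ℝ)) := by
    rw [Real.mul_rpow (mul_pos hΩ hb).le (Real.rpow_nonneg hchpos.le _),
      Real.mul_rpow hΩ.le hb.le, ← Real.rpow_mul hchpos.le]
    norm_num
  rw [emid]
  have hμ2 : μ ^ 2 = 9 / 70 * A * (Ω ^ ((3 : ℝ) / 2) * b₁ ^ ((3 : ℝ) / 2)) := by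
    have hX : (0 : ℝ) < 9 / 70 * A * Ω ^ ((3 : ℝ) / 2) * b₁ ^ ((3 : ℝ) / 2) := by positivity
    have h2 : μ ^ 2 = 9 / 70 * A * Ω ^ ((3 : ℝ) / 2) * b₁ ^ ((3 : ℝ) / 2) := by
      rw [hμ, ← Real.rpow_natCast (_ ^ ((1 : ℝ) / 2)) 2, ← Real.rpow_mul hX.le]
      norm_num
    rw [h2]; ring
  have H1 : sh ^ 2 = ch ^ 2 - 1 := by
    have := Real.cosh_sq (μ * x + ν * t)
    rw [← hch, ← hsh] at this; linarith
  have H2 : ch ^ (-(13 : ℝ) / 3) * ch ^ 2 = ch ^ (-(7 : ℝ) / 3) := by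
    rw [pow_two, ← mul_assoc, ← Real.rpow_add_one hchpos.ne', ← Real.rpow_add_one hchpos.ne']
    norm_num
  have H3 : ch ^ (-(2 : ℝ)) * ch ^ (-(7 : ℝ) / 3) = ch ^ (-(13 : ℝ) / 3) := by
    rw [← Real.rpow_add hchpos]; norm_num
  linear_combination (-(4 : ℝ) / 3 * C * ch ^ (-(7 : ℝ) / 3) * sh) * hν
    + (-(4 : ℝ) / 3 * A * C * μ * (Ω ^ ((3 : ℝ) / 2) * b₁ ^ ((3 : ℝ) / 2)) * sh) * H3
    + (-(280 : ℝ) / 27 * C * μ ^ 3 * ch ^ (-(13 : ℝ) / 3) * sh) * H1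
    + (-(280 : ℝ) / 27 * C * μ ^ 3 * sh) * H2
    + ((280 : ℝ) / 27 * C * μ * ch ^ (-(13 : ℝ) / 3) * sh) * hμ2
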